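/- Let G be a locally compact Hausdorff topological group with a left Haar measure μ, and let ω be a weight on G. Let A be a real Banach algebra, C ≥ 0, and α : G → A →L A a family of bounded linear maps such that the map (r, a) ↦ α_r(a) from G × A to A is continuous and ‖α_r‖ ≤ C for all r ∈ G. Then for all continuous compactly supported f, g : G → A, the twisted convolution f*g, defined by (f*g)(s) := ∫_G f(r)·α_r(g(r⁻¹s)) dμ(r), satisfies ∫_G ‖(f*g)(s)‖ ω(s) dμ(s) ≤ C · (∫_G ‖f(r)‖ ω(r) dμ(r)) · (∫_G ‖g(r)‖ ω(r) dμ(r)); that is, ‖f*g‖_{1,ω} ≤ C ‖f‖_{1,ω} ‖g‖_{1,ω}. -/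

import Mathlib

open MeasureTheory
open Set Pointwise
open scoped NNReal ENNReal

/-- A measurable set of positive Haar measure with compact closure satisfies the Steinhaus
property: `E / E` is a neighborhood of `1`. -/
lemma steinhaus_of_compactClosure
    {G : Type*} [Group G] [TopologicalSpace G] [IsTopologicalGroup G]
    [LocallyCompactSpace G] [T2Space G]
    [MeasurableSpace G] [BorelSpace G]
    (μ : Measure G) [μ.IsHaarMeasure]
    {E : Set G} (hE : MeasurableSet E) (hEc : IsCompact (closure E))
    (hEpos : 0 < μ E) : E / E ∈ nhds (1 : G) := by
  set ν : Measure G := Measure.haar with hν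
  have h1 : μ E = Measure.haarScalarFactor μ ν • ν E :=
    Measure.measure_isMulInvariant_eq_smul_of_isCompact_closure μ ν hEc
  have hνE : 0 < ν E := by
    rcases eq_or_lt_of_le (zero_le : 0 ≤ ν E) with h | h
    · rw [h1, ← h] at hEpos; simp at hEpos
    · exact h
  have hνEfin : ν E ≠ ⊤ := by
    refine ne_top_of_le_ne_top hEc.measure_lt_top.ne (measure_mono subset_closure)
  obtain ⟨K, hKE, hKcomp, hKpos⟩ := hE.exists_lt_isCompact_of_ne_top hνEfin hνE
  have hev := eventually_nhds_one_measure_smul_diff_lt (μ := ν) hKcomp hKcomp.isClosed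
    hKpos.ne' (ε := ν K)
  filter_upwards [hev] with g hg
  have hnd : ¬ Disjoint (g • K) K := fun hd => by
    rw [hd.symm.sdiff_eq_right, measure_smul] at hg
    exact hg.false
  rcases Set.not_disjoint_iff.1 hnd with ⟨_, ⟨x, hxK, rfl⟩, hgxK⟩
  simpa using div_mem_div (hKE hgxK) (hKE hxK)

/-- A nonzero submultiplicative measurable weight is bounded on compact sets. -/
lemma weight_loc_bdd
    {G : Type*} [Group G] [TopologicalSpace G] [IsTopologicalGroup G]
    [LocallyCompactSpace G] [T2Space G]
    [MeasurableSpace G] [BorelSpace G]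
    (μ : Measure G) [μ.IsHaarMeasure]
    (ω : G → ℝ) (hω_meas : Measurable ω) (hω_nonneg : ∀ s : G, 0 ≤ ω s)
    (hω_submul : ∀ s t : G, ω (s * t) ≤ ω s * ω t)
    {K : Set G} (hK : IsCompact K) : ∃ M : ℝ, 0 ≤ M ∧ ∀ x ∈ K, ω x ≤ M := by
  classical
  set ψ : G → ℝ := fun x => max (ω x) (ω x⁻¹) with hψ
  have hψ_meas : Measurable ψ := hω_meas.max (hω_meas.comp measurable_inv)
  obtain ⟨K₀, hK₀c, hK₀n⟩ := exists_compact_mem_nhds (1 : G)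
  have hK₀pos : 0 < μ K₀ := by
    have h1 : (1 : G) ∈ interior K₀ := mem_interior_iff_mem_nhds.2 hK₀n
    exact lt_of_lt_of_le (isOpen_interior.measure_pos μ ⟨1, h1⟩) (measure_mono interior_subset)
  set E : ℕ → Set G := fun n => K₀ ∩ ψ ⁻¹' (Set.Iic (n : ℝ)) with hE
  have hEmeas : ∀ n, MeasurableSet (E n) := fun n =>
    (hK₀c.isClosed.measurableSet).inter (hψ_meas measurableSet_Iic)
  have hcover : K₀ ⊆ ⋃ n, E n := by
    intro x hx
    obtain ⟨n, hn⟩ := exists_nat_ge (ψ x)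
    exact Set.mem_iUnion.2 ⟨n, hx, hn⟩
  obtain ⟨n, hn⟩ : ∃ n, 0 < μ (E n) := by
    by_contra h
    push_neg at h
    have h0 : ∀ n, μ (E n) = 0 := fun n => le_antisymm (h n) zero_le
    have : μ K₀ = 0 := by
      refine le_antisymm ?_ zero_le
      calc μ K₀ ≤ μ (⋃ n, E n) := measure_mono hcover
        _ ≤ ∑' n, μ (E n) := measure_iUnion_le _
        _ = 0 := by simp [h0]
    exact absurd this hK₀pos.ne'
  have hEcc : IsCompact (closure (E n)) :=
    hK₀c.of_isClosed_subset isClosed_closure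
      (closure_minimal Set.inter_subset_left hK₀c.isClosed)
  have hV : E n / E n ∈ nhds (1 : G) :=
    steinhaus_of_compactClosure μ (hEmeas n) hEcc hn
  have hVbd : ∀ v ∈ E n / E n, ω v ≤ (n : ℝ) * n := by
    rintro v hv
    rcases Set.mem_div.1 hv with ⟨a, ha, b, hb, rfl⟩
    have ha' : ω a ≤ (n : ℝ) := le_trans (le_max_left _ _) ha.2
    have hb' : ω b⁻¹ ≤ (n : ℝ) := le_trans (le_max_right _ _) hb.2
    calc ω (a / b) = ω (a * b⁻¹) := by rw [div_eq_mul_inv]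
      _ ≤ ω a * ω b⁻¹ := hω_submul _ _
      _ ≤ (n : ℝ) * n := mul_le_mul ha' hb' (hω_nonneg _) (Nat.cast_nonneg _)
  -- cover K by translates of V
  obtain ⟨t, -, ht⟩ := hK.elim_nhds_subcover (fun x => x • (E n / E n)) (fun x _ => by
    simpa using smul_mem_nhds_smul x hV)
  refine ⟨(∑ x ∈ t, ω x) * ((n : ℝ) * n), ?_, ?_⟩
  · exact mul_nonneg (Finset.sum_nonneg fun i _ => hω_nonneg i)
      (mul_nonneg (Nat.cast_nonneg _) (Nat.cast_nonneg _))
  · intro y hy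
    obtain ⟨x, hxt, hyx⟩ := Set.mem_iUnion₂.1 (ht hy)
    rcases Set.mem_smul_set.1 hyx with ⟨v, hvV, rfl⟩
    have : ω (x * v) ≤ ω x * ω v := hω_submul x v
    calc ω (x • v) = ω (x * v) := by rw [smul_eq_mul]
      _ ≤ ω x * ω v := hω_submul x v
      _ ≤ ω x * ((n : ℝ) * n) :=
          mul_le_mul_of_nonneg_left (hVbd v hvV) (hω_nonneg x)
      _ ≤ (∑ x ∈ t, ω x) * ((n : ℝ) * n) :=
          mul_le_mul_of_nonneg_right
            (Finset.single_le_sum (fun i _ => hω_nonneg i) hxt)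
            (mul_nonneg (Nat.cast_nonneg _) (Nat.cast_nonneg _))

/-- Integrability of a bounded measurable function vanishing off a finite-measure set. -/
lemma integrable_of_bdd_vanishing {X : Type*} [MeasurableSpace X] {μ : Measure X}
    {h : X → ℝ} (hm : AEStronglyMeasurable h μ) {S : Set X} (hfin : μ S ≠ ⊤) {B : ℝ}
    (hb : ∀ x, ‖h x‖ ≤ B) (h0 : ∀ x ∉ S, h x = 0) :
    Integrable h μ := by
  have hsub : Function.support h ⊆ S := fun x hx => by
    by_contra hxS; exact hx (h0 x hxS)
  refine (integrableOn_iff_integrable_of_support_subset hsub).mp ?_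
  exact ⟨hm.restrict, HasFiniteIntegral.restrict_of_bounded (C := B) hfin.lt_top
    (Filter.Eventually.of_forall hb)⟩

/-- Let `G` be a locally compact Hausdorff group with left Haar
measure `μ` and `ω` a weight on `G` (non-zero, Borel measurable, nonnegative,
submultiplicative). Let `A` be a real Banach algebra and `α : G → A →L A` a
family of bounded linear maps with `(r, a) ↦ α r a` continuous and `‖α r‖ ≤ C`.
Then for continuous compactly supported `f, g : G → A`, the twisted convolution
satisfies `‖f*g‖_{1,ω} ≤ C * ‖f‖_{1,ω} * ‖g‖_{1,ω}`. -/
theorem stmt11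
    {G : Type*} [Group G] [TopologicalSpace G] [IsTopologicalGroup G]
    [LocallyCompactSpace G] [T2Space G]
    [MeasurableSpace G] [BorelSpace G]
    (μ : Measure G) [μ.IsHaarMeasure]
    (ω : G → ℝ) (hω_meas : Measurable ω) (hω_nonneg : ∀ s : G, 0 ≤ ω s)
    (hω_ne : ω ≠ 0)
    (hω_submul : ∀ s t : G, ω (s * t) ≤ ω s * ω t)
    {A : Type*} [NormedRing A] [NormedAlgebra ℝ A] [CompleteSpace A]
    (C : ℝ) (hC : 0 ≤ C)
    (α : G → A →L[ℝ] A)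
    (hα_cont : Continuous fun p : G × A => α p.1 p.2)
    (hα_bdd : ∀ r : G, ‖α r‖ ≤ C)
    (f g : G → A)
    (hf_cont : Continuous f) (hf_supp : HasCompactSupport f)
    (hg_cont : Continuous g) (hg_supp : HasCompactSupport g) :
    (∫ s, ‖∫ r, f r * α r (g (r⁻¹ * s)) ∂μ‖ * ω s ∂μ) ≤
      C * (∫ r, ‖f r‖ * ω r ∂μ) * (∫ r, ‖g r‖ * ω r ∂μ) := by
  classical
  set a : G → ℝ := fun r => ‖f r‖ with ha_def
  set b : G → ℝ := fun s => ‖g s‖ with hb_def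
  have ha_cont : Continuous a := hf_cont.norm
  have hb_cont : Continuous b := hg_cont.norm
  have ha_supp : HasCompactSupport a := hf_supp.norm
  have hb_supp : HasCompactSupport b := hg_supp.norm
  have ha_nonneg : ∀ r, 0 ≤ a r := fun r => norm_nonneg _
  have hb_nonneg : ∀ s, 0 ≤ b s := fun s => norm_nonneg _
  set Kf : Set G := tsupport a with hKf_def
  set Kg : Set G := tsupport b with hKg_def
  have hKf : IsCompact Kf := ha_supp
  have hKg : IsCompact Kg := hb_supp
  set Kfg : Set G := Kf * Kg with hKfg_def
  have hKfg : IsCompact Kfg := hKf.mul hKg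
  have hKfg_meas : MeasurableSet Kfg := hKfg.isClosed.measurableSet
  -- the weighted measure ρ
  set ω' : G → ℝ≥0 := fun s => (ω s).toNNReal with hω'_def
  have hω'_meas : Measurable ω' := hω_meas.real_toNNReal
  have hω'_coe : ∀ s, (ω' s : ℝ) = ω s := fun s => Real.coe_toNNReal _ (hω_nonneg s)
  set ρ : Measure G := μ.withDensity (fun s => (ω' s : ℝ≥0∞)) with hρ_def
  haveI hρ_fin : IsFiniteMeasureOnCompacts ρ := by
    constructor
    intro K hK
    obtain ⟨M, hM0, hM⟩ := weight_loc_bdd μ ω hω_meas hω_nonneg hω_submul hK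
    rw [hρ_def, withDensity_apply _ hK.isClosed.measurableSet]
    calc ∫⁻ s in K, (ω' s : ℝ≥0∞) ∂μ ≤ ∫⁻ _ in K, ENNReal.ofReal M ∂μ := by
          refine setLIntegral_mono' hK.isClosed.measurableSet fun s hs => ?_
          exact ENNReal.ofReal_le_ofReal (hM s hs)
      _ = ENNReal.ofReal M * μ K := by rw [setLIntegral_const]
      _ < ⊤ := ENNReal.mul_lt_top ENNReal.ofReal_lt_top hK.measure_lt_top
  have hρ_integral : ∀ h : G → ℝ, (∫ s, h s ∂ρ) = ∫ s, h s * ω s ∂μ := by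
    intro h
    rw [hρ_def, integral_withDensity_eq_integral_smul hω'_meas h]
    congr 1 with s
    rw [NNReal.smul_def, smul_eq_mul, hω'_coe s, mul_comm]
  -- bounds for a, b, ω on the relevant compacts
  obtain ⟨Mfg, hMfg0, hMfg⟩ := weight_loc_bdd μ ω hω_meas hω_nonneg hω_submul hKfg
  obtain ⟨Mf, hMf0, hMf⟩ := weight_loc_bdd μ ω hω_meas hω_nonneg hω_submul hKf
  obtain ⟨Mg, hMg0, hMg⟩ := weight_loc_bdd μ ω hω_meas hω_nonneg hω_submul hKg
  obtain ⟨Ba, hBa⟩ := ha_supp.exists_bound_of_continuous ha_cont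
  obtain ⟨Bb, hBb⟩ := hb_supp.exists_bound_of_continuous hb_cont
  have hBa' : ∀ r, a r ≤ Ba := fun r => (Real.le_norm_self _).trans (hBa r)
  have hBb' : ∀ s, b s ≤ Bb := fun s => (Real.le_norm_self _).trans (hBb s)
  have hBa0 : 0 ≤ Ba := le_trans (ha_nonneg 1) (hBa' 1)
  have hBb0 : 0 ≤ Bb := le_trans (hb_nonneg 1) (hBb' 1)
  -- the convolution majorant
  set k : G → ℝ := fun s => ∫ r, a r * b (r⁻¹ * s) ∂μ with hk_def
  set W : G × G → ℝ := fun p => a p.2 * b (p.2⁻¹ * p.1) with hW_def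
  have hW_cont : Continuous W := by
    apply Continuous.mul (ha_cont.comp continuous_snd)
    exact hb_cont.comp ((continuous_snd.inv).mul continuous_fst)
  have hW_supp : HasCompactSupport W := by
    apply HasCompactSupport.intro (hKfg.prod hKf)
    intro p hp
    rw [Set.mem_prod, not_and_or] at hp
    by_cases hr : p.2 ∈ Kf
    · by_cases hs : p.2⁻¹ * p.1 ∈ Kg
      · exfalso
        rcases hp with hp | hp
        · refine hp ?_
          have : p.1 = p.2 * (p.2⁻¹ * p.1) := by group
          rw [this]
          exact Set.mul_mem_mul hr hs
        · exact hp hr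
      · have : b (p.2⁻¹ * p.1) = 0 := image_eq_zero_of_notMem_tsupport hs
        simp [hW_def, this]
    · have : a p.2 = 0 := image_eq_zero_of_notMem_tsupport hr
      simp [hW_def, this]
  -- measurability and bound for k
  have hk_eq : ∀ s, k s = ∫ r, W (s, r) ∂(μ.restrict Kf) := by
    intro s
    rw [hk_def]
    refine (setIntegral_eq_integral_of_forall_compl_eq_zero fun r hr => ?_).symm
    have : a r = 0 := image_eq_zero_of_notMem_tsupport hr
    simp [hW_def, this]
  haveI : IsFiniteMeasure (μ.restrict Kf) := by
    constructor
    rw [Measure.restrict_apply_univ]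
    exact hKf.measure_lt_top
  have hk_meas : StronglyMeasurable k := by
    have hWm : StronglyMeasurable W := hW_supp.stronglyMeasurable_of_prod hW_cont
    have := hWm.integral_prod_right' (ν := μ.restrict Kf)
    simpa [← hk_eq] using this
  have hk_zero : ∀ s ∉ Kfg, k s = 0 := by
    intro s hs
    rw [hk_def]
    have hz : ∀ r, a r * b (r⁻¹ * s) = 0 := by
      intro r
      by_cases hr : r ∈ Kf
      · have hsg : r⁻¹ * s ∉ Kg := by
          intro hmem
          apply hs
          have : s = r * (r⁻¹ * s) := by group
          rw [this]; exact Set.mul_mem_mul hr hmem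
        have : b (r⁻¹ * s) = 0 := image_eq_zero_of_notMem_tsupport hsg
        simp [this]
      · have : a r = 0 := image_eq_zero_of_notMem_tsupport hr
        simp [this]
    simp [hz]
  set Bk : ℝ := Ba * Bb * (μ Kf).toReal with hBk_def
  have hk_bdd : ∀ s, ‖k s‖ ≤ Bk := by
    intro s
    rw [hk_eq s]
    have hWb : ∀ r, ‖W (s, r)‖ ≤ Ba * Bb := by
      intro r
      rw [Real.norm_eq_abs, abs_of_nonneg (mul_nonneg (ha_nonneg _) (hb_nonneg _))]
      exact mul_le_mul (hBa' _) (hBb' _) (hb_nonneg _) hBa0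
    calc ‖∫ r, W (s, r) ∂(μ.restrict Kf)‖
        ≤ (Ba * Bb) * ((μ.restrict Kf) Set.univ).toReal :=
          norm_integral_le_of_norm_le_const (Filter.Eventually.of_forall hWb)
      _ = Bk := by rw [Measure.restrict_apply_univ, hBk_def]
  have hk_nonneg : ∀ s, 0 ≤ k s := by
    intro s
    rw [hk_def]
    exact integral_nonneg fun r => mul_nonneg (ha_nonneg r) (hb_nonneg _)
  have hk_le : ∀ s, k s ≤ Bk := fun s => (Real.le_norm_self _).trans (hk_bdd s)
  have hBk0 : 0 ≤ Bk := le_trans (hk_nonneg 1) (hk_le 1)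
  -- Step 1 : pointwise bound ‖conv s‖ ≤ C * k s
  have step1 : ∀ s : G, ‖∫ r, f r * α r (g (r⁻¹ * s)) ∂μ‖ ≤ C * k s := by
    intro s
    have hint : Integrable (fun r => C * (a r * b (r⁻¹ * s))) μ := by
      apply Continuous.integrable_of_hasCompactSupport
      · exact continuous_const.mul ((ha_cont).mul (hb_cont.comp
          ((continuous_id.inv).mul continuous_const)))
      · apply HasCompactSupport.intro hKf
        intro r hr
        have : a r = 0 := image_eq_zero_of_notMem_tsupport hr
        simp [this]
    calc ‖∫ r, f r * α r (g (r⁻¹ * s)) ∂μ‖ ≤ ∫ r, ‖f r * α r (g (r⁻¹ * s))‖ ∂μ :=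
          norm_integral_le_integral_norm _
      _ ≤ ∫ r, C * (a r * b (r⁻¹ * s)) ∂μ := by
          refine integral_mono_of_nonneg (Filter.Eventually.of_forall fun r => norm_nonneg _)
            hint (Filter.Eventually.of_forall fun r => ?_)
          calc ‖f r * α r (g (r⁻¹ * s))‖ ≤ ‖f r‖ * ‖α r (g (r⁻¹ * s))‖ := norm_mul_le _ _
            _ ≤ ‖f r‖ * (C * ‖g (r⁻¹ * s)‖) := by
                refine mul_le_mul_of_nonneg_left ?_ (norm_nonneg _)
                refine le_trans ((α r).le_opNorm _) ?_
                exact mul_le_mul_of_nonneg_right (hα_bdd r) (norm_nonneg _)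
            _ = C * (a r * b (r⁻¹ * s)) := by rw [ha_def, hb_def]; ring
      _ = C * k s := by rw [hk_def, integral_const_mul]
  -- LHS bound by the ρ-integral of k
  have step2 : (∫ s, ‖∫ r, f r * α r (g (r⁻¹ * s)) ∂μ‖ * ω s ∂μ) ≤ C * ∫ s, k s ∂ρ := by
    have hint : Integrable (fun s => C * k s * ω s) μ := by
      refine integrable_of_bdd_vanishing ((hk_meas.measurable.const_mul C).mul
        hω_meas).aestronglyMeasurable hKfg.measure_lt_top.ne
        (B := C * Bk * Mfg) (fun s => ?_) (fun s hs => by simp [hk_zero s hs])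
      by_cases hs : s ∈ Kfg
      · rw [Real.norm_eq_abs, abs_of_nonneg (mul_nonneg (mul_nonneg hC (hk_nonneg s))
          (hω_nonneg s))]
        exact mul_le_mul (mul_le_mul_of_nonneg_left (hk_le s) hC) (hMfg s hs) (hω_nonneg s)
          (mul_nonneg hC hBk0)
      · rw [hk_zero s hs]
        simp only [mul_zero, zero_mul, norm_zero]
        exact mul_nonneg (mul_nonneg hC hBk0) hMfg0
    calc (∫ s, ‖∫ r, f r * α r (g (r⁻¹ * s)) ∂μ‖ * ω s ∂μ) ≤ ∫ s, C * k s * ω s ∂μ := by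
          refine integral_mono_of_nonneg (Filter.Eventually.of_forall fun s =>
            mul_nonneg (norm_nonneg _) (hω_nonneg s)) hint
            (Filter.Eventually.of_forall fun s => ?_)
          exact mul_le_mul_of_nonneg_right (step1 s) (hω_nonneg s)
      _ = C * ∫ s, k s ∂ρ := by
          rw [hρ_integral k, ← integral_const_mul]
          congr 1 with s
          ring
  -- swap, using Fubini for continuous compactly supported functions
  have step3 : (∫ s, k s ∂ρ) = ∫ r, a r * ∫ s, b (r⁻¹ * s) ∂ρ ∂μ := by
    have hswap := integral_integral_swap_of_hasCompactSupport
      (f := fun s r => a r * b (r⁻¹ * s)) (μ := ρ) (ν := μ) hW_cont hW_supp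
    calc (∫ s, k s ∂ρ) = ∫ s, (∫ r, a r * b (r⁻¹ * s) ∂μ) ∂ρ := by rw [hk_def]
      _ = ∫ r, (∫ s, a r * b (r⁻¹ * s) ∂ρ) ∂μ := hswap
      _ = ∫ r, a r * ∫ s, b (r⁻¹ * s) ∂ρ ∂μ := by
          congr 1 with r
          rw [integral_const_mul]
  -- the translation estimate
  set cg : ℝ := ∫ s, b s * ω s ∂μ with hcg_def
  have hcg_nonneg : 0 ≤ cg :=
    integral_nonneg fun s => mul_nonneg (hb_nonneg s) (hω_nonneg s)
  have step4 : ∀ r : G, (∫ s, b (r⁻¹ * s) ∂ρ) ≤ ω r * cg := by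
    intro r
    have hLg : IsCompact ((fun x => r * x) '' Kg) := hKg.image (continuous_mul_left r)
    have hint : Integrable (fun s => ω r * (b (r⁻¹ * s) * ω (r⁻¹ * s))) μ := by
      have hmeas : Measurable fun s : G => ω r * (b (r⁻¹ * s) * ω (r⁻¹ * s)) := by
        have h1 : Measurable fun s : G => r⁻¹ * s := measurable_const_mul r⁻¹
        exact ((hb_cont.measurable.comp h1).mul (hω_meas.comp h1)).const_mul (ω r)
      refine integrable_of_bdd_vanishing hmeas.aestronglyMeasurable
        hLg.measure_lt_top.ne (B := ω r * (Bb * Mg)) (fun s => ?_) (fun s hs => ?_)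
      · by_cases hsg : r⁻¹ * s ∈ Kg
        · rw [Real.norm_eq_abs, abs_of_nonneg (mul_nonneg (hω_nonneg r)
            (mul_nonneg (hb_nonneg _) (hω_nonneg _)))]
          refine mul_le_mul_of_nonneg_left ?_ (hω_nonneg r)
          exact mul_le_mul (hBb' _) (hMg _ hsg) (hω_nonneg _) hBb0
        · have : b (r⁻¹ * s) = 0 := image_eq_zero_of_notMem_tsupport hsg
          rw [this]
          simp only [zero_mul, mul_zero, norm_zero]
          exact mul_nonneg (hω_nonneg r) (mul_nonneg hBb0 hMg0)
      · have hsg : r⁻¹ * s ∉ Kg := by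
          intro hmem
          apply hs
          exact ⟨r⁻¹ * s, hmem, by group⟩
        have : b (r⁻¹ * s) = 0 := image_eq_zero_of_notMem_tsupport hsg
        rw [this]; ring
    calc (∫ s, b (r⁻¹ * s) ∂ρ) = ∫ s, b (r⁻¹ * s) * ω s ∂μ :=
          hρ_integral (fun s => b (r⁻¹ * s))
      _ ≤ ∫ s, ω r * (b (r⁻¹ * s) * ω (r⁻¹ * s)) ∂μ := by
          refine integral_mono_of_nonneg (Filter.Eventually.of_forall fun s =>
            mul_nonneg (hb_nonneg _) (hω_nonneg s)) hint
            (Filter.Eventually.of_forall fun s => ?_)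
          have hsub : ω s ≤ ω r * ω (r⁻¹ * s) := by
            have := hω_submul r (r⁻¹ * s)
            rwa [mul_inv_cancel_left] at this
          calc b (r⁻¹ * s) * ω s ≤ b (r⁻¹ * s) * (ω r * ω (r⁻¹ * s)) :=
                mul_le_mul_of_nonneg_left hsub (hb_nonneg _)
            _ = ω r * (b (r⁻¹ * s) * ω (r⁻¹ * s)) := by ring
      _ = ω r * ∫ s, b (r⁻¹ * s) * ω (r⁻¹ * s) ∂μ := integral_const_mul _ _
      _ = ω r * ∫ s, b s * ω s ∂μ := by
          rw [integral_mul_left_eq_self (fun s => b s * ω s) r⁻¹]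
      _ = ω r * cg := by rw [hcg_def]
  -- final estimate
  have step5 : (∫ r, a r * ∫ s, b (r⁻¹ * s) ∂ρ ∂μ) ≤ (∫ r, a r * ω r ∂μ) * cg := by
    have hint : Integrable (fun r => (a r * ω r) * cg) μ := by
      have hmeas : Measurable fun r : G => (a r * ω r) * cg :=
        (ha_cont.measurable.mul hω_meas).mul_const cg
      refine integrable_of_bdd_vanishing hmeas.aestronglyMeasurable
        hKf.measure_lt_top.ne (B := (Ba * Mf) * cg) (fun r => ?_) (fun r hr => ?_)
      · by_cases hrf : r ∈ Kf
        · rw [Real.norm_eq_abs, abs_of_nonneg (mul_nonneg (mul_nonneg (ha_nonneg r)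
            (hω_nonneg r)) hcg_nonneg)]
          refine mul_le_mul_of_nonneg_right ?_ hcg_nonneg
          exact mul_le_mul (hBa' _) (hMf _ hrf) (hω_nonneg _) hBa0
        · have : a r = 0 := image_eq_zero_of_notMem_tsupport hrf
          rw [this]
          simp only [zero_mul, norm_zero]
          exact mul_nonneg (mul_nonneg hBa0 hMf0) hcg_nonneg
      · have : a r = 0 := image_eq_zero_of_notMem_tsupport hr
        rw [this]; ring
    calc (∫ r, a r * ∫ s, b (r⁻¹ * s) ∂ρ ∂μ) ≤ ∫ r, (a r * ω r) * cg ∂μ := by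
          refine integral_mono_of_nonneg (Filter.Eventually.of_forall fun r =>
            mul_nonneg (ha_nonneg r) (integral_nonneg fun s => hb_nonneg _)) hint
            (Filter.Eventually.of_forall fun r => ?_)
          calc a r * ∫ s, b (r⁻¹ * s) ∂ρ ≤ a r * (ω r * cg) :=
              mul_le_mul_of_nonneg_left (step4 r) (ha_nonneg r)
            _ = (a r * ω r) * cg := by ring
      _ = (∫ r, a r * ω r ∂μ) * cg := integral_mul_const _ _
  -- put everything together
  calc (∫ s, ‖∫ r, f r * α r (g (r⁻¹ * s)) ∂μ‖ * ω s ∂μ) ≤ C * ∫ s, k s ∂ρ := step2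
    _ = C * ∫ r, a r * ∫ s, b (r⁻¹ * s) ∂ρ ∂μ := by rw [step3]
    _ ≤ C * ((∫ r, a r * ω r ∂μ) * cg) :=
        mul_le_mul_of_nonneg_left step5 hC
    _ = C * (∫ r, ‖f r‖ * ω r ∂μ) * (∫ r, ‖g r‖ * ω r ∂μ) := by
        rw [hcg_def, ha_def, hb_def]; ring
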